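/- In the ring of formal power series Q[[t₁,t₂]], the identity 2(t₁+t₂)·( t₁t₂/((1-e^{-t₁})(1-e^{-t₂})) - t₁·t₂/(1-e^{-t₂}) ) + (t₁+t₂)·t₁·2t₂/(1-e^{-2t₂}) = ( t₁·2t₂·(t₁+t₂) / ((1-e^{-t₁})(1-e^{-2t₂})(1-e^{-(t₁+t₂)})) ) · (1 - e^{-2(t₁+t₂)}) holds. -/

import Mathlib

/-- `expNeg a` is the formal power series `exp (-w) ∈ ℚ[[t₁,…,t_r]]` for the linear form
`w = ∑ⱼ aⱼ tⱼ`: its coefficient on the monomial `d` is `∏ⱼ (-aⱼ)^{dⱼ}/dⱼ!`. -/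
noncomputable def expNeg {r : ℕ} (a : Fin r → ℚ) : MvPowerSeries (Fin r) ℚ :=
  fun d : Fin r →₀ ℕ => ∏ j : Fin r, (-(a j)) ^ (d j) / (Nat.factorial (d j) : ℚ)

instance : IsDomain (MvPowerSeries (Fin 2) ℚ) := NoZeroDivisors.to_isDomain _

lemma exp_coeff_add (x y : ℚ) (n : ℕ) :
    (x + y) ^ n / (n.factorial : ℚ) =
      ∑ k ∈ Finset.range (n + 1), (x ^ k / (k.factorial : ℚ)) *
        (y ^ (n - k) / ((n - k).factorial : ℚ)) := by
  rw [add_pow, Finset.sum_div]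
  refine Finset.sum_congr rfl fun k hk => ?_
  have hk' : k ≤ n := Nat.lt_succ_iff.mp (Finset.mem_range.mp hk)
  rw [Nat.cast_choose ℚ hk']
  have h1 : ((k.factorial : ℚ)) ≠ 0 := Nat.cast_ne_zero.mpr k.factorial_ne_zero
  have h2 : (((n - k).factorial : ℚ)) ≠ 0 := Nat.cast_ne_zero.mpr (n - k).factorial_ne_zero
  have h3 : ((n.factorial : ℚ)) ≠ 0 := Nat.cast_ne_zero.mpr n.factorial_ne_zero
  field_simp

lemma expNeg_add {r : ℕ} (a b : Fin r → ℚ) : expNeg (a + b) = expNeg a * expNeg b := by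
  ext d
  rw [MvPowerSeries.coeff_mul, MvPowerSeries.coeff_apply]
  show (∏ j : Fin r, (-((a + b) j)) ^ (d j) / ((d j).factorial : ℚ)) = _
  have step1 : ∀ j : Fin r, (-((a + b) j)) ^ (d j) / ((d j).factorial : ℚ) =
      ∑ k ∈ Finset.range (d j + 1), ((-(a j)) ^ k / (k.factorial : ℚ)) *
        ((-(b j)) ^ (d j - k) / ((d j - k).factorial : ℚ)) := by
    intro j
    have : -((a + b) j) = (-(a j)) + (-(b j)) := by simp [Pi.add_apply]; ring
    rw [this, exp_coeff_add]
  simp_rw [step1]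
  rw [Finset.prod_univ_sum]
  refine Finset.sum_nbij' (fun x => (Finsupp.equivFunOnFinite.symm x,
      d - Finsupp.equivFunOnFinite.symm x))
    (fun p => fun j => p.1 j) ?_ ?_ ?_ ?_ ?_
  · intro x hx
    rw [Finset.HasAntidiagonal.mem_antidiagonal]
    have hle : Finsupp.equivFunOnFinite.symm x ≤ d := by
      rw [Finsupp.le_iff]
      intro j _
      have := Fintype.mem_piFinset.mp hx j
      simpa using Nat.lt_succ_iff.mp (Finset.mem_range.mp this)
    exact add_tsub_cancel_of_le hle
  · intro p hp
    rw [Finset.HasAntidiagonal.mem_antidiagonal] at hp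
    rw [Fintype.mem_piFinset]
    intro j
    rw [Finset.mem_range, Nat.lt_succ_iff]
    calc p.1 j ≤ p.1 j + p.2 j := Nat.le_add_right _ _
    _ = d j := by rw [← Finsupp.add_apply, hp]
  · intro x hx
    funext j
    simp
  · intro p hp
    rw [Finset.HasAntidiagonal.mem_antidiagonal] at hp
    have h1 : Finsupp.equivFunOnFinite.symm (fun j => p.1 j) = p.1 := by
      apply Finsupp.ext; intro j; simp
    rw [h1, ← hp, add_tsub_cancel_left]
  · intro x hx
    rw [MvPowerSeries.coeff_apply, MvPowerSeries.coeff_apply]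
    show _ = (∏ j : Fin r, _ / _) * ∏ j : Fin r, _ / _
    rw [← Finset.prod_mul_distrib]
    refine Finset.prod_congr rfl fun j _ => ?_
    have e1 : (Finsupp.equivFunOnFinite.symm x) j = x j := rfl
    have e2 : (d - Finsupp.equivFunOnFinite.symm x) j = d j - x j := by
      rw [Finsupp.tsub_apply, e1]
    rw [e1, e2]

lemma one_sub_expNeg_ne {r : ℕ} (a : Fin r → ℚ) (j : Fin r) (h : a j ≠ 0) :
    (1 : MvPowerSeries (Fin r) ℚ) - expNeg a ≠ 0 := by
  intro h0
  have hc := congrArg (MvPowerSeries.coeff (Finsupp.single j 1)) h0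
  rw [map_sub, map_zero] at hc
  have hone : MvPowerSeries.coeff (Finsupp.single j 1) (1 : MvPowerSeries (Fin r) ℚ) = 0 := by
    rw [MvPowerSeries.coeff_one, if_neg]
    intro hs
    have := congrArg (fun f : Fin r →₀ ℕ => f j) hs
    simp at this
  have hexp : MvPowerSeries.coeff (Finsupp.single j 1) (expNeg a) = -(a j) := by
    rw [MvPowerSeries.coeff_apply]
    show (∏ j' : Fin r, (-(a j')) ^ ((Finsupp.single j 1 : Fin r →₀ ℕ) j') / _) = _
    rw [Finset.prod_eq_single j]
    · simp
    · intro j' _ hj'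
      rw [Finsupp.single_apply, if_neg (fun hh => hj' hh.symm)]
      simp
    · simp
  rw [hone, hexp] at hc
  simp at hc
  exact h hc

lemma todd_key (K : Type*) [Field K] (t₁ t₂ x y : K) (h1 : 1 - x ≠ 0) (h2 : 1 - y ≠ 0) (h3 : 1 - y*y ≠ 0) (h4 : 1 - x*y ≠ 0) : 2 * (t₁ + t₂) * (t₁ * t₂ / ((1 - x) * (1 - y)) - t₁ * (t₂ / (1 - y))) +
      (t₁ + t₂) * t₁ * (2 * t₂ / (1 - y * y)) =
    t₁ * (2 * t₂) * (t₁ + t₂) / ((1 - x) * (1 - y * y) * (1 - x * y)) *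
      (1 - x * y * (x * y)) := by
  rw [← sq] at h3
  field_simp
  ring

/-- Computation of the equivariant Todd class of the Whitney umbrella
`X = {x₁² = x₂²x₃} ⊂ ℂ³` at the origin (torus characters `t₁+t₂`, `t₁`, `2t₂`), carried out
in the fraction field of `ℚ[[t₁,t₂]]`:
`2(t₁+t₂)·(t₁t₂/((1-e^{-t₁})(1-e^{-t₂})) - t₁·t₂/(1-e^{-t₂})) + (t₁+t₂)·t₁·2t₂/(1-e^{-2t₂})
  = (t₁·2t₂·(t₁+t₂)/((1-e^{-t₁})(1-e^{-2t₂})(1-e^{-(t₁+t₂)})))·(1-e^{-2(t₁+t₂)})`. -/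
theorem whitney_umbrella_todd_class :
    let K := FractionRing (MvPowerSeries (Fin 2) ℚ)
    let ι : MvPowerSeries (Fin 2) ℚ →+* K := algebraMap _ _
    let t₁ : K := ι (MvPowerSeries.X 0)
    let t₂ : K := ι (MvPowerSeries.X 1)
    let E : ℚ → ℚ → K := fun a b => ι (expNeg ![a, b])
    2 * (t₁ + t₂) * (t₁ * t₂ / ((1 - E 1 0) * (1 - E 0 1)) - t₁ * (t₂ / (1 - E 0 1)))
        + (t₁ + t₂) * t₁ * (2 * t₂ / (1 - E 0 2))
      = t₁ * (2 * t₂) * (t₁ + t₂) / ((1 - E 1 0) * (1 - E 0 2) * (1 - E 1 1))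
          * (1 - E 2 2) := by
  intro K ι t₁ t₂ E
  have hinj : Function.Injective ι := IsFractionRing.injective (MvPowerSeries (Fin 2) ℚ) K
  have hne : ∀ (a b : ℚ) (j : Fin 2), (![a, b] : Fin 2 → ℚ) j ≠ 0 → (1 : K) - E a b ≠ 0 := by
    intro a b j hj h0
    have : ι ((1 : MvPowerSeries (Fin 2) ℚ) - expNeg ![a, b]) = ι 0 := by
      rw [map_sub, map_one, map_zero]; exact h0
    exact one_sub_expNeg_ne ![a, b] j hj (hinj this)
  have hadd : ∀ (a b c d : ℚ), E (a + c) (b + d) = E a b * E c d := by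
    intro a b c d
    show ι (expNeg ![a + c, b + d]) = ι (expNeg ![a, b]) * ι (expNeg ![c, d])
    rw [← map_mul, ← expNeg_add]
    have hv : (![a, b] + ![c, d] : Fin 2 → ℚ) = ![a + c, b + d] := by
      funext i; fin_cases i <;> simp
    rw [hv]
  have h1 : (1 : K) - E 1 0 ≠ 0 := hne 1 0 0 (by norm_num)
  have h2 : (1 : K) - E 0 1 ≠ 0 := hne 0 1 1 (by norm_num)
  have h3 : (1 : K) - E 0 2 ≠ 0 := hne 0 2 1 (by norm_num)
  have h4 : (1 : K) - E 1 1 ≠ 0 := hne 1 1 0 (by norm_num)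
  have hy2 : E 0 2 = E 0 1 * E 0 1 := by
    have h := hadd 0 1 0 1; norm_num at h; exact h
  have hxy : E 1 1 = E 1 0 * E 0 1 := by
    have h := hadd 1 0 0 1; norm_num at h; exact h
  have h22 : E 2 2 = E 1 1 * E 1 1 := by
    have h := hadd 1 1 1 1; norm_num at h; exact h
  rw [h22, hxy, hy2]
  rw [hxy] at h4
  rw [hy2] at h3
  exact todd_key K t₁ t₂ (E 1 0) (E 0 1) h1 h2 h3 h4
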